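/- T_rec[M̂] ≰ T_TandG[M̂,F]: there exists a recursive TGNN T ∈ T_rec[M̂] such that for every time-and-graph TGNN T' ∈ T_TandG[M̂,F] there is a discrete pointed temporal graph (TG,v) with T(TG,v) = 1 not equivalent to T'(TG,v) = 1. -/

import Mathlib

set_option maxHeartbeats 1000000

/-! ### Vectors -/

/-- Real vectors of dimension `d`. -/
abbrev Vec (d : ℕ) := Fin d → ℝ

/-- Cast a vector along an equality of dimensions. -/
def Vec.cast {m n : ℕ} (h : m = n) (x : Vec m) : Vec n := fun j => x (Fin.cast h.symm j)

/-- Truncated ReLU. -/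
noncomputable def trReLU (x : ℝ) : ℝ := max 0 (min 1 x)

/-- A single FNN layer: an affine map with rational weights followed by entrywise trReLU. -/
structure AffineLayer (m n : ℕ) where
  weight : Fin n → Fin m → ℚ
  bias : Fin n → ℚ

noncomputable def AffineLayer.eval {m n : ℕ} (l : AffineLayer m n) (x : Vec m) : Vec n :=
  fun j => trReLU ((∑ i, (l.weight j i : ℝ) * x i) + (l.bias j : ℝ))

/-- A feedforward neural network with trReLU activations,
of input dimension `m` and output dimension `n`. -/
structure FNN (m n : ℕ) where
  depth : ℕ
  dims : ℕ → ℕ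
  dim_in : dims 0 = m
  dim_out : dims depth = n
  layers : ∀ i : ℕ, AffineLayer (dims i) (dims (i + 1))

noncomputable def FNN.evalAux {m n : ℕ} (N : FNN m n) : (i : ℕ) → Vec (N.dims 0) → Vec (N.dims i)
  | 0, x => x
  | i + 1, x => (N.layers i).eval (N.evalAux i x)

noncomputable def FNN.eval {m n : ℕ} (N : FNN m n) (x : Vec m) : Vec n :=
  Vec.cast N.dim_out (N.evalAux N.depth (Vec.cast N.dim_in.symm x))

/-! ### Message-passing GNNs -/

/-- A general message-passing GNN: a finite sequence of layers, each consisting of an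
arbitrary multiset-aggregation function and an arbitrary combination function. -/
structure MPNN where
  depth : ℕ
  dims : ℕ → ℕ
  aggDims : ℕ → ℕ
  agg : ∀ i : ℕ, Multiset (Vec (dims i)) → Vec (aggDims i)
  comb : ∀ i : ℕ, Vec (dims i) → Vec (aggDims i) → Vec (dims (i + 1))

/-- Embeddings computed by an MPNN on a labelled graph (given by a symmetric boolean
adjacency function and a labelling `c`). -/
noncomputable def MPNN.emb (M : MPNN) {V : Type} [Fintype V] [DecidableEq V]
    (adj : V → V → Bool) (c : V → Vec (M.dims 0)) : (i : ℕ) → V → Vec (M.dims i)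
  | 0 => c
  | i + 1 => fun v =>
      M.comb i (M.emb adj c i v)
        (M.agg i ((Finset.univ.filter fun u => adj v u = true).val.map
          fun u => M.emb adj c i u))

/-- The final embedding `M(G,v)`. -/
noncomputable def MPNN.run (M : MPNN) {V : Type} [Fintype V] [DecidableEq V]
    (adj : V → V → Bool) (c : V → Vec (M.dims 0)) (v : V) : Vec (M.dims M.depth) :=
  M.emb adj c M.depth v

/-- Entrywise sum of a multiset of vectors. -/
noncomputable def sumAgg (d : ℕ) (S : Multiset (Vec d)) : Vec d :=
  fun j => (S.map fun x => x j).sum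

/-- The class `M̂`: MPNNs whose combination functions are realised by FNNs with trReLU
activations and whose aggregation is the entrywise sum of the multiset. -/
structure MPNNhat where
  depth : ℕ
  dims : ℕ → ℕ
  comb : ∀ i : ℕ, FNN (dims i + dims i) (dims (i + 1))

noncomputable def MPNNhat.toMPNN (M : MPNNhat) : MPNN where
  depth := M.depth
  dims := M.dims
  aggDims := M.dims
  agg := fun i => sumAgg (M.dims i)
  comb := fun i x y => (M.comb i).eval (Fin.append x y)

/-! ### Discrete temporal graphs -/

/-- A discrete temporal graph over vertex set `V` with `k` colours: a sequence of `len`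
snapshots (indexed `0, …, len - 1`, the timestamp of index `i` being `i + 1`), each with a
symmetric set of undirected edges and a `{0,1}`-colouring of the nodes. -/
structure TemporalGraph (V : Type) (k : ℕ) where
  len : ℕ
  len_pos : 0 < len
  adj : ℕ → V → V → Bool
  symm : ∀ i u w, adj i u w = adj i w u
  label : ℕ → V → Fin k → Bool

/-- The colour vector of node `v` at time index `i`, as a real vector. -/
noncomputable def TemporalGraph.colVec {V : Type} {k : ℕ} (TG : TemporalGraph V k)
    (i : ℕ) (v : V) : Vec k :=
  fun j => if TG.label i v j then 1 else 0

/-! ### The product logic PTL_{P,Y} × K -/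

/-- Formulas of the product logic `PTL_{P,Y} × K` over `k` colour propositions. -/
inductive PTLK (k : ℕ) : Type where
  | colour : Fin k → PTLK k
  | not : PTLK k → PTLK k
  | and : PTLK k → PTLK k → PTLK k
  | dia : PTLK k → PTLK k
  | yest : PTLK k → PTLK k
  | past : PTLK k → PTLK k

/-- Satisfaction of a formula at timestamped node `(v, i)` (time indices start at `0`). -/
def Sat {V : Type} {k : ℕ} (TG : TemporalGraph V k) : PTLK k → ℕ → V → Prop
  | .colour j, i, v => TG.label i v j = true
  | .not φ, i, v => ¬ Sat TG φ i v
  | .and φ ψ, i, v => Sat TG φ i v ∧ Sat TG ψ i v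
  | .dia φ, i, v => ∃ u : V, TG.adj i v u = true ∧ Sat TG φ i u
  | .yest φ, i, v => 0 < i ∧ Sat TG φ (i - 1) v
  | .past φ, i, v => ∃ j < i, Sat TG φ j v

/-- The list of subformulas of a formula (containing the formula itself). -/
def PTLK.subformulas {k : ℕ} : PTLK k → List (PTLK k)
  | .colour j => [.colour j]
  | .not φ => .not φ :: φ.subformulas
  | .and φ ψ => .and φ ψ :: (φ.subformulas ++ ψ.subformulas)
  | .dia φ => .dia φ :: φ.subformulas
  | .yest φ => .yest φ :: φ.subformulas
  | .past φ => .past φ :: φ.subformulas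

/-- A formula is temporal if its outermost operator is `Y` or `P`. -/
def PTLK.isTemporal {k : ℕ} : PTLK k → Prop
  | .yest _ => True
  | .past _ => True
  | _ => False

/-- A formula is atomic if it is a colour proposition. -/
def PTLK.isAtomic {k : ℕ} : PTLK k → Prop
  | .colour _ => True
  | _ => False

/-! ### Recursive TGNNs over M̂ -/

/-- A recursive TGNN `T = (M, out)` with `M ∈ M̂`: the input dimension of `M` is
`k + d` where `d` is the output dimension of `M`, and `out` is a single-layer FNN with
trReLU activation. -/
structure RecTGNN (k : ℕ) where
  M : MPNNhat
  dim_in : M.dims 0 = k + M.dims M.depth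
  out : AffineLayer (M.dims M.depth) 1

/-- The state `h_v^{(depth)}(t_i)` computed by a recursive TGNN. -/
noncomputable def RecTGNN.state {k : ℕ} (T : RecTGNN k) {V : Type} [Fintype V] [DecidableEq V]
    (TG : TemporalGraph V k) : ℕ → V → Vec (T.M.dims T.M.depth)
  | 0 => fun v => T.M.toMPNN.run (TG.adj 0)
      (fun u => Vec.cast T.dim_in.symm (Fin.append (TG.colVec 0 u) (fun _ => 0))) v
  | i + 1 => fun v => T.M.toMPNN.run (TG.adj (i + 1))
      (fun u => Vec.cast T.dim_in.symm (Fin.append (TG.colVec (i + 1) u) (T.state TG i u))) v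

/-- The input labelling `h_v^{(0)}(t_i)` fed to `M` at time index `i`. -/
noncomputable def RecTGNN.input {k : ℕ} (T : RecTGNN k) {V : Type} [Fintype V] [DecidableEq V]
    (TG : TemporalGraph V k) : ℕ → V → Vec (T.M.dims 0)
  | 0 => fun u => Vec.cast T.dim_in.symm (Fin.append (TG.colVec 0 u) (fun _ => 0))
  | i + 1 => fun u => Vec.cast T.dim_in.symm (Fin.append (TG.colVec (i + 1) u) (T.state TG i u))

/-- The output `T(TG, v)` of a recursive TGNN at the last time index. -/
noncomputable def RecTGNN.output {k : ℕ} (T : RecTGNN k) {V : Type} [Fintype V] [DecidableEq V]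
    (TG : TemporalGraph V k) (v : V) : ℝ :=
  T.out.eval (T.state TG (TG.len - 1) v) 0

/-- `T` captures `φ`: on every discrete pointed temporal graph, `T` outputs `1`
iff `φ` is satisfied at the distinguished node at the last timestamp. -/
def RecTGNN.captures {k : ℕ} (T : RecTGNN k) (φ : PTLK k) : Prop :=
  ∀ (V : Type) [Fintype V] [DecidableEq V], ∀ (TG : TemporalGraph V k) (v : V),
    Sat TG φ (TG.len - 1) v ↔ T.output TG v = 1

/-! ### Time-and-graph TGNNs -/

/-- A time-and-graph TGNN `T = (M₁, M₂, Cell, out)` with arbitrary MPNNs `M₁, M₂` (of the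
same number of layers), arbitrary cell function and arbitrary output function. -/
structure TandGTGNN (k : ℕ) where
  M₁ : MPNN
  M₂ : MPNN
  sameDepth : M₁.depth = M₂.depth
  hdim : ℕ
  dim1 : M₁.dims 0 = k
  dim2 : M₂.dims 0 = hdim
  cell : Vec (M₁.dims M₁.depth) → Vec (M₂.dims M₂.depth) → Vec hdim
  out : Vec hdim → ℝ

noncomputable def TandGTGNN.state {k : ℕ} (T : TandGTGNN k) {V : Type} [Fintype V]
    [DecidableEq V] (TG : TemporalGraph V k) : ℕ → V → Vec T.hdim
  | 0 => fun v => T.cell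
      (T.M₁.run (TG.adj 0) (fun u => Vec.cast T.dim1.symm (TG.colVec 0 u)) v)
      (T.M₂.run (TG.adj 0) (fun _ => Vec.cast T.dim2.symm (fun _ => 0)) v)
  | i + 1 => fun v => T.cell
      (T.M₁.run (TG.adj (i + 1)) (fun u => Vec.cast T.dim1.symm (TG.colVec (i + 1) u)) v)
      (T.M₂.run (TG.adj (i + 1)) (fun u => Vec.cast T.dim2.symm (T.state TG i u)) v)

noncomputable def TandGTGNN.output {k : ℕ} (T : TandGTGNN k) {V : Type} [Fintype V]
    [DecidableEq V] (TG : TemporalGraph V k) (v : V) : ℝ :=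
  T.out (T.state TG (TG.len - 1) v)

def TandGTGNN.captures {k : ℕ} (T : TandGTGNN k) (φ : PTLK k) : Prop :=
  ∀ (V : Type) [Fintype V] [DecidableEq V], ∀ (TG : TemporalGraph V k) (v : V),
    Sat TG φ (TG.len - 1) v ↔ T.output TG v = 1

/-- Membership of a time-and-graph TGNN in the class `T_TandG[M̂, F]`: both MPNNs lie in
`M̂`, the cell is a single-layer FNN with trReLU activations, and so is the output. -/
def TandGTGNN.inHatF {k : ℕ} (T : TandGTGNN k) : Prop :=
  (∃ N₁ : MPNNhat, T.M₁ = N₁.toMPNN) ∧ (∃ N₂ : MPNNhat, T.M₂ = N₂.toMPNN) ∧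
  (∃ C : AffineLayer (T.M₁.dims T.M₁.depth + T.M₂.dims T.M₂.depth) T.hdim,
     ∀ x y, T.cell x y = C.eval (Fin.append x y)) ∧
  (∃ O : AffineLayer T.hdim 1, ∀ x, T.out x = O.eval x 0)

/-! ### Global TGNNs -/

/-- An operation combining an embedding vector with a time-feature vector of dimension `m`. -/
structure GlobOp (m : ℕ) where
  cdim : ℕ → ℕ
  op : ∀ d : ℕ, Vec d → Vec m → Vec (cdim d)

/-- A global TGNN `T = (M, φ', out)` with arbitrary MPNN components, arbitrary time
function, arbitrary combining operation and arbitrary output function. -/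
structure GlobTGNN (k : ℕ) where
  tdim : ℕ
  circ : GlobOp tdim
  timeFn : ℝ → Vec tdim
  depth : ℕ
  dims : ℕ → ℕ
  dim_in : dims 0 = k
  aggDims : ℕ → ℕ
  agg : ∀ i : ℕ, Multiset (Vec (circ.cdim (dims i))) → Vec (aggDims i)
  comb : ∀ i : ℕ, Vec (dims i) → Vec (aggDims i) → Vec (dims (i + 1))
  out : Vec (dims depth) → ℝ

/-- The embeddings `h_v^{(i)}(t_j)` computed by a global TGNN. -/
noncomputable def GlobTGNN.emb {k : ℕ} (T : GlobTGNN k) {V : Type} [Fintype V] [DecidableEq V]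
    (TG : TemporalGraph V k) : (i : ℕ) → ℕ → V → Vec (T.dims i)
  | 0 => fun j v => Vec.cast T.dim_in.symm (TG.colVec j v)
  | i + 1 => fun j v =>
      T.comb i (T.emb TG i j v)
        (T.agg i ((Finset.range (j + 1)).val.bind fun h =>
          (Finset.univ.filter fun u => TG.adj h v u = true).val.map
            fun u => T.circ.op _ (T.emb TG i h u) (T.timeFn ((j : ℝ) - (h : ℝ)))))

noncomputable def GlobTGNN.output {k : ℕ} (T : GlobTGNN k) {V : Type} [Fintype V]
    [DecidableEq V] (TG : TemporalGraph V k) (v : V) : ℝ :=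
  T.out (T.emb TG T.depth (TG.len - 1) v)

def GlobTGNN.captures {k : ℕ} (T : GlobTGNN k) (φ : PTLK k) : Prop :=
  ∀ (V : Type) [Fintype V] [DecidableEq V], ∀ (TG : TemporalGraph V k) (v : V),
    Sat TG φ (TG.len - 1) v ↔ T.output TG v = 1

/-- Vector concatenation as the combining operation `∥`. -/
def concatOp (m : ℕ) : GlobOp m where
  cdim := fun d => d + m
  op := fun _ x y => Fin.append x y

/-- A time2vec function. -/
structure Time2Vec (m : ℕ) where
  w : Fin m → ℚ
  b : Fin m → ℚ
  σ : ℝ → ℝ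
  period : ℝ
  period_pos : 0 < period
  periodic : Function.Periodic σ period

noncomputable def Time2Vec.eval {m : ℕ} (f : Time2Vec m) (t : ℝ) : Vec m :=
  fun j => if (j : ℕ) = 0 then (f.w j : ℝ) * t + (f.b j : ℝ)
           else f.σ ((f.w j : ℝ) * t + (f.b j : ℝ))

/-- The class `T_glob[M̂_msg, Q_time2vec, ∥]`: global TGNNs whose MPNN lies in `M̂_msg`
(combination functions given by trReLU FNNs and aggregation `agg S = Σ_{x∈S} msg(x)` with
`msg` a trReLU FNN), whose time function is a time2vec function, and whose combining
operation is vector concatenation; the output is a single-layer trReLU FNN. -/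
structure GlobTGNNmsg (k : ℕ) where
  tdim : ℕ
  timeFn : Time2Vec tdim
  depth : ℕ
  dims : ℕ → ℕ
  dim_in : dims 0 = k
  aggDims : ℕ → ℕ
  msg : ∀ i : ℕ, FNN (dims i + tdim) (aggDims i)
  comb : ∀ i : ℕ, FNN (dims i + aggDims i) (dims (i + 1))
  out : AffineLayer (dims depth) 1

noncomputable def GlobTGNNmsg.toGlob {k : ℕ} (T : GlobTGNNmsg k) : GlobTGNN k where
  tdim := T.tdim
  circ := concatOp T.tdim
  timeFn := T.timeFn.eval
  depth := T.depth
  dims := T.dims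
  dim_in := T.dim_in
  aggDims := T.aggDims
  agg := fun i S => sumAgg (T.aggDims i) (S.map (T.msg i).eval)
  comb := fun i x y => (T.comb i).eval (Fin.append x y)
  out := fun x => (T.out).eval x 0

noncomputable def GlobTGNNmsg.output {k : ℕ} (T : GlobTGNNmsg k) {V : Type} [Fintype V]
    [DecidableEq V] (TG : TemporalGraph V k) (v : V) : ℝ :=
  T.toGlob.output TG v

def GlobTGNNmsg.captures {k : ℕ} (T : GlobTGNNmsg k) (φ : PTLK k) : Prop :=
  ∀ (V : Type) [Fintype V] [DecidableEq V], ∀ (TG : TemporalGraph V k) (v : V),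
    Sat TG φ (TG.len - 1) v ↔ T.output TG v = 1

/-! ### Auxiliary constructions for the separation -/

section Sep

/-- Generic unfolding lemmas for `MPNN.emb`. -/
lemma MPNN.emb_succ (M : MPNN) {V : Type} [Fintype V] [DecidableEq V]
    (adj : V → V → Bool) (c : V → Vec (M.dims 0)) (i : ℕ) (v : V) :
    M.emb adj c (i + 1) v =
      M.comb i (M.emb adj c i v)
        (M.agg i ((Finset.univ.filter fun u => adj v u = true).val.map
          fun u => M.emb adj c i u)) := rfl

lemma MPNN.emb_one (M : MPNN) {V : Type} [Fintype V] [DecidableEq V]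
    (adj : V → V → Bool) (c : V → Vec (M.dims 0)) (v : V) :
    M.emb adj c 1 v =
      M.comb 0 (c v)
        (M.agg 0 ((Finset.univ.filter fun u => adj v u = true).val.map c)) := rfl

lemma MPNN.emb_two (M : MPNN) {V : Type} [Fintype V] [DecidableEq V]
    (adj : V → V → Bool) (c : V → Vec (M.dims 0)) (v : V) :
    M.emb adj c 2 v =
      M.comb 1 (M.emb adj c 1 v)
        (M.agg 1 ((Finset.univ.filter fun u => adj v u = true).val.map
          fun u => M.emb adj c 1 u)) := rfl

/-- On an edgeless graph, the embedding of a node depends only on its own label. -/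
lemma MPNN.emb_bot (M : MPNN) {V : Type} [Fintype V] [DecidableEq V]
    (adj : V → V → Bool) (h : ∀ u w, adj u w = false)
    (c c' : V → Vec (M.dims 0)) (u u' : V) (hc : c u = c' u') :
    ∀ i, M.emb adj c i u = M.emb adj c' i u'
  | 0 => hc
  | i + 1 => by
    have hf : ∀ w : V, (Finset.univ.filter fun x => adj w x = true) = ∅ := by
      intro w
      apply Finset.filter_eq_empty_iff.mpr
      intro x _
      simp [h]
    rw [MPNN.emb_succ, MPNN.emb_succ, hf, hf]
    simp only [Finset.empty_val, Multiset.map_zero]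
    rw [MPNN.emb_bot M adj h c c' u u' hc i]

/-- MPNNs are invariant under relabelling by a permutation preserving the adjacency. -/
lemma MPNN.emb_perm (M : MPNN) {V : Type} [Fintype V] [DecidableEq V] (π : Equiv.Perm V)
    (adj : V → V → Bool) (hadj : ∀ u w, adj (π u) (π w) = adj u w)
    (c c' : V → Vec (M.dims 0)) (hc : ∀ u, c (π u) = c' u) :
    ∀ (i : ℕ) (u : V), M.emb adj c' i u = M.emb adj c i (π u)
  | 0, u => (hc u).symm
  | i + 1, u => by
    have h1 : ∀ w, M.emb adj c' i w = M.emb adj c i (π w) :=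
      MPNN.emb_perm M π adj hadj c c' hc i
    rw [MPNN.emb_succ, MPNN.emb_succ]
    rw [MPNN.emb_perm M π adj hadj c c' hc i u]
    have h2 : (Finset.univ.filter fun w => adj u w = true) =
        (Finset.univ.filter fun w => adj (π u) (π w) = true) := by
      apply Finset.filter_congr
      intro w _
      simp [hadj]
    have key : (Finset.univ.filter fun w => adj (π u) w = true) =
        ((Finset.univ.filter fun w => adj (π u) (π w) = true)).map π.toEmbedding := by
      conv_lhs => rw [← Finset.univ_map_equiv_to_embedding π]
      rw [Finset.filter_map]
      rfl
    rw [Multiset.map_congr rfl (fun w _ => h1 w), h2, key]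
    simp [Finset.map_val, Multiset.map_map, Function.comp]

end Sep

section SepDefs

def star3 : Fin 3 → Fin 3 → Bool := fun u w => (u == 0 || w == 0) && u != w

def adjF : ℕ → Fin 3 → Fin 3 → Bool := fun i u w => (i == 1) && star3 u w

lemma adjF_symm : ∀ i u w, adjF i u w = adjF i w u := by
  have h : ∀ u w, star3 u w = star3 w u := by decide
  intro i u w
  simp [adjF, h u w]

def labA : ℕ → Fin 3 → Fin 2 → Bool :=
  fun i u j => (i == 0 && u == 1 && j == 1) || (i == 1 && u == 1 && j == 0)

def labB : ℕ → Fin 3 → Fin 2 → Bool :=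
  fun i u j => (i == 0 && u == 2 && j == 1) || (i == 1 && u == 1 && j == 0)

def TGA : TemporalGraph (Fin 3) 2 := ⟨2, by norm_num, adjF, adjF_symm, labA⟩
def TGB : TemporalGraph (Fin 3) 2 := ⟨2, by norm_num, adjF, adjF_symm, labB⟩

def L0 : AffineLayer 6 2 := ⟨![![1,0,1,0,0,0], ![0,1,0,0,0,0]], ![-1,0]⟩
def L1 : AffineLayer 4 1 := ⟨![![0,1,1,0]], ![0]⟩
def Lz : AffineLayer 2 1 := ⟨![![0,0]], ![0]⟩
def Lout : AffineLayer 1 1 := ⟨![![1]], ![0]⟩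

def mkFNN1 {m n : ℕ} (l : AffineLayer m n) : FNN m n where
  depth := 1
  dims := fun i => match i with | 0 => m | _ + 1 => n
  dim_in := rfl
  dim_out := rfl
  layers := fun i => match i with | 0 => l | _ + 1 => ⟨fun _ _ => 0, fun _ => 0⟩

lemma mkFNN1_eval {m n : ℕ} (l : AffineLayer m n) (x : Vec m) :
    (mkFNN1 l).eval x = l.eval x := rfl

def Mdims : ℕ → ℕ := fun i => match i with | 0 => 3 | 1 => 2 | _ => 1

def Mhat : MPNNhat where
  depth := 2
  dims := Mdims
  comb := fun i => match i with
    | 0 => mkFNN1 L0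
    | 1 => mkFNN1 L1
    | _ + 2 => mkFNN1 Lz

def Trec : RecTGNN 2 where
  M := Mhat
  dim_in := rfl
  out := Lout

end SepDefs

section SepComp

lemma append33 (x y : Vec 3) : Fin.append x y = ![x 0, x 1, x 2, y 0, y 1, y 2] := by
  funext j; fin_cases j <;> rfl

lemma append21 (x : Vec 2) (y : Vec 1) : Fin.append x y = ![x 0, x 1, y 0] := by
  funext j; fin_cases j <;> rfl

lemma append22 (x y : Vec 2) : Fin.append x y = ![x 0, x 1, y 0, y 1] := by
  funext j; fin_cases j <;> rfl

lemma comb0_eval (x y : Vec 3) :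
    Mhat.toMPNN.comb 0 x y = ![trReLU (x 0 + x 2 - 1), trReLU (x 1)] := by
  show L0.eval (Fin.append x y) = _
  rw [append33]
  funext j
  fin_cases j <;>
    simp [L0, AffineLayer.eval, Fin.sum_univ_six,
      show ((![1,0,1,0,0,0] : Fin 6 → ℚ) 5) = 0 from rfl,
      show ((![0,1,0,0,0,0] : Fin 6 → ℚ) 5) = 0 from rfl] <;> ring_nf

lemma comb1_eval (x y : Vec 2) :
    Mhat.toMPNN.comb 1 x y = ![trReLU (x 1 + y 0)] := by
  show L1.eval (Fin.append x y) = _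
  rw [append22]
  funext j
  fin_cases j <;>
    simp [L1, AffineLayer.eval, Fin.sum_univ_four] <;> ring_nf

lemma filt0 : ∀ u : Fin 3, (Finset.univ.filter fun w => adjF 0 u w = true) = ∅ := by decide

lemma filt1 : (Finset.univ.filter fun w => adjF 1 0 w = true) = {1, 2} := by decide

end SepComp

section SepComp2

lemma sumAgg_zero (d : ℕ) : sumAgg d 0 = fun _ => 0 := by
  funext j; simp [sumAgg]

lemma pair_val : ({1, 2} : Finset (Fin 3)).val = {1, 2} := by decide

lemma run_empty (c : Fin 3 → Vec 3) (u : Fin 3) :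
    Mhat.toMPNN.run (adjF 0) c u = ![trReLU (trReLU (c u 1))] := by
  show L1.eval (Fin.append (L0.eval (Fin.append (c u) (sumAgg 3 0))) (sumAgg 2 0)) = _
  have e0 : ∀ x y : Vec 3, L0.eval (Fin.append x y) = ![trReLU (x 0 + x 2 - 1), trReLU (x 1)] :=
    comb0_eval
  have e1 : ∀ x y : Vec 2, L1.eval (Fin.append x y) = ![trReLU (x 1 + y 0)] := comb1_eval
  rw [e0, e1]
  simp [sumAgg]

lemma run_star (c : Fin 3 → Vec 3) :
    Mhat.toMPNN.run (adjF 1) c 0 =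
      ![trReLU (trReLU (c 0 1) +
          (trReLU (c 1 0 + c 1 2 - 1) + trReLU (c 2 0 + c 2 2 - 1)))] := by
  show L1.eval (Fin.append (L0.eval (Fin.append (c 0) (sumAgg 3 {c 1, c 2})))
    (sumAgg 2 {L0.eval (Fin.append (c 1) (sumAgg 3 {c 0})),
      L0.eval (Fin.append (c 2) (sumAgg 3 {c 0}))})) = _
  have e0 : ∀ x y : Vec 3, L0.eval (Fin.append x y) = ![trReLU (x 0 + x 2 - 1), trReLU (x 1)] :=
    comb0_eval
  have e1 : ∀ x y : Vec 2, L1.eval (Fin.append x y) = ![trReLU (x 1 + y 0)] := comb1_eval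
  simp only [e0, e1]
  simp [sumAgg, Matrix.cons_val_one, add_assoc]

end SepComp2

section SepComp3

lemma cast_in (x : Vec (2 + Mdims Mhat.depth)) : Vec.cast Trec.dim_in.symm x = x := rfl

lemma input_zero (x : Vec 2) (y : Vec (Mdims Mhat.depth)) :
    Vec.cast Trec.dim_in.symm (Fin.append x y) ((0 : Fin 3)) = x 0 := rfl

lemma input_one (x : Vec 2) (y : Vec (Mdims Mhat.depth)) :
    Vec.cast Trec.dim_in.symm (Fin.append x y) ((1 : Fin 3)) = x 1 := rfl

lemma input_two (x : Vec 2) (y : Vec (Mdims Mhat.depth)) :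
    Vec.cast Trec.dim_in.symm (Fin.append x y) ((2 : Fin 3)) = y ((0 : Fin 1)) := rfl

lemma stateA0 (u : Fin 3) : Trec.state TGA 0 u = ![if u = 1 then (1:ℝ) else 0] := by
  show Mhat.toMPNN.run (adjF 0)
      (fun w => Vec.cast Trec.dim_in.symm (Fin.append (TGA.colVec 0 w) fun _ => 0)) u = _
  refine (run_empty _ u).trans ?_
  show ![trReLU (trReLU (TGA.colVec 0 u 1))] = _
  funext j
  fin_cases j
  fin_cases u <;> norm_num [TGA, TemporalGraph.colVec, labA, trReLU, Fin.ext_iff]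

lemma stateB0 (u : Fin 3) : Trec.state TGB 0 u = ![if u = 2 then (1:ℝ) else 0] := by
  show Mhat.toMPNN.run (adjF 0)
      (fun w => Vec.cast Trec.dim_in.symm (Fin.append (TGB.colVec 0 w) fun _ => 0)) u = _
  refine (run_empty _ u).trans ?_
  show ![trReLU (trReLU (TGB.colVec 0 u 1))] = _
  funext j
  fin_cases j
  fin_cases u <;> norm_num [TGB, TemporalGraph.colVec, labB, trReLU, Fin.ext_iff]

end SepComp3

section SepComp4

lemma outA : Trec.output TGA 0 = 1 := by
  show Lout.eval (Trec.state TGA 1 0) (0 : Fin 1) = 1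
  rw [show Trec.state TGA 1 0 = Mhat.toMPNN.run (adjF 1)
        (fun u => Vec.cast Trec.dim_in.symm
          (Fin.append (TGA.colVec 1 u) (Trec.state TGA 0 u))) 0 from rfl]
  have hc : (fun u => Vec.cast Trec.dim_in.symm
      (Fin.append (TGA.colVec 1 u) (Trec.state TGA 0 u))) =
      (fun u : Fin 3 => (![TGA.colVec 1 u 0, TGA.colVec 1 u 1, if u = 1 then (1:ℝ) else 0] : Vec 3)) := by
    funext u j
    match j with
    | ⟨0, _⟩ => rfl
    | ⟨1, _⟩ => rfl
    | ⟨2, _⟩ => exact congrFun (stateA0 u) _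
    | ⟨n + 3, h⟩ => exact absurd h (by show ¬ n + 3 < 3; omega)
  refine (congrArg (fun c => Lout.eval (Mhat.toMPNN.run (adjF 1) c 0) 0) hc).trans ?_
  beta_reduce
  rw [run_star]
  norm_num [TGA, TemporalGraph.colVec, labA, trReLU, Lout, AffineLayer.eval,
    Fin.sum_univ_one, Fin.ext_iff, Matrix.cons_val_two, Matrix.tail_cons, Matrix.head_cons]

lemma outB : Trec.output TGB 0 = 0 := by
  show Lout.eval (Trec.state TGB 1 0) (0 : Fin 1) = 0
  rw [show Trec.state TGB 1 0 = Mhat.toMPNN.run (adjF 1)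
        (fun u => Vec.cast Trec.dim_in.symm
          (Fin.append (TGB.colVec 1 u) (Trec.state TGB 0 u))) 0 from rfl]
  have hc : (fun u => Vec.cast Trec.dim_in.symm
      (Fin.append (TGB.colVec 1 u) (Trec.state TGB 0 u))) =
      (fun u : Fin 3 => (![TGB.colVec 1 u 0, TGB.colVec 1 u 1, if u = 2 then (1:ℝ) else 0] : Vec 3)) := by
    funext u j
    match j with
    | ⟨0, _⟩ => rfl
    | ⟨1, _⟩ => rfl
    | ⟨2, _⟩ => exact congrFun (stateB0 u) _
    | ⟨n + 3, h⟩ => exact absurd h (by show ¬ n + 3 < 3; omega)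
  refine (congrArg (fun c => Lout.eval (Mhat.toMPNN.run (adjF 1) c 0) 0) hc).trans ?_
  beta_reduce
  rw [run_star]
  norm_num [TGB, TemporalGraph.colVec, labB, trReLU, Lout, AffineLayer.eval,
    Fin.sum_univ_one, Fin.ext_iff, Matrix.cons_val_two, Matrix.tail_cons, Matrix.head_cons]

end SepComp4

section SepTandG

lemma hbot : ∀ u w : Fin 3, adjF 0 u w = false := by decide
lemma hadj1 : ∀ u w : Fin 3, adjF 1 (![0,2,1] u) (![0,2,1] w) = adjF 1 u w := by decide
lemma hlab0 : ∀ (u : Fin 3) (j : Fin 2), labA 0 (![0,2,1] u) j = labB 0 u j := by decide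
lemma hlab1 : ∀ (u : Fin 3) (j : Fin 2), labA 1 u j = labB 1 u j := by decide

lemma hswap : ∀ x : Fin 3, Equiv.swap (1 : Fin 3) 2 x = ![0,2,1] x := by
  intro x
  fin_cases x <;> simp [Equiv.swap_apply_def] <;> rfl

lemma colA0_swap (u : Fin 3) :
    TGA.colVec 0 (Equiv.swap (1 : Fin 3) 2 u) = TGB.colVec 0 u := by
  funext j
  simp only [TemporalGraph.colVec, TGA, TGB, hswap u]
  rw [hlab0 u j]
  rfl

lemma colA1_eq (u : Fin 3) : TGA.colVec 1 u = TGB.colVec 1 u := by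
  funext j
  simp only [TemporalGraph.colVec, TGA, TGB]
  simp only [hlab1]
  rfl

lemma tandg_state0 (T' : TandGTGNN 2) (u : Fin 3) :
    T'.state TGA 0 (Equiv.swap (1 : Fin 3) 2 u) = T'.state TGB 0 u := by
  set π := Equiv.swap (1 : Fin 3) 2 with hπ
  show T'.cell
      (T'.M₁.run (adjF 0) (fun w => Vec.cast T'.dim1.symm (TGA.colVec 0 w)) (π u))
      (T'.M₂.run (adjF 0) (fun _ => Vec.cast T'.dim2.symm fun _ => 0) (π u)) =
    T'.cell
      (T'.M₁.run (adjF 0) (fun w => Vec.cast T'.dim1.symm (TGB.colVec 0 w)) u)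
      (T'.M₂.run (adjF 0) (fun _ => Vec.cast T'.dim2.symm fun _ => 0) u)
  have e1 : T'.M₁.run (adjF 0) (fun w => Vec.cast T'.dim1.symm (TGA.colVec 0 w)) (π u) =
      T'.M₁.run (adjF 0) (fun w => Vec.cast T'.dim1.symm (TGB.colVec 0 w)) u :=
    MPNN.emb_bot T'.M₁ (adjF 0) hbot _ _ _ _
      (congrArg (Vec.cast T'.dim1.symm) (colA0_swap u)) T'.M₁.depth
  have e2 : T'.M₂.run (adjF 0) (fun _ => Vec.cast T'.dim2.symm fun _ => 0) (π u) =
      T'.M₂.run (adjF 0) (fun _ => Vec.cast T'.dim2.symm fun _ => 0) u :=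
    MPNN.emb_bot T'.M₂ (adjF 0) hbot _ _ (π u) u rfl T'.M₂.depth
  rw [e1, e2]

lemma tandg_eq (T' : TandGTGNN 2) : T'.output TGA 0 = T'.output TGB 0 := by
  show T'.out (T'.state TGA 1 0) = T'.out (T'.state TGB 1 0)
  show T'.out (T'.cell
      (T'.M₁.run (adjF 1) (fun w => Vec.cast T'.dim1.symm (TGA.colVec 1 w)) 0)
      (T'.M₂.run (adjF 1) (fun w => Vec.cast T'.dim2.symm (T'.state TGA 0 w)) 0)) =
    T'.out (T'.cell
      (T'.M₁.run (adjF 1) (fun w => Vec.cast T'.dim1.symm (TGB.colVec 1 w)) 0)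
      (T'.M₂.run (adjF 1) (fun w => Vec.cast T'.dim2.symm (T'.state TGB 0 w)) 0))
  have hcol : (fun w => Vec.cast T'.dim1.symm (TGA.colVec 1 w)) =
      (fun w => Vec.cast T'.dim1.symm (TGB.colVec 1 w)) := by
    funext w
    exact congrArg _ (colA1_eq w)
  have hadjπ : ∀ u w : Fin 3,
      adjF 1 (Equiv.swap (1 : Fin 3) 2 u) (Equiv.swap (1 : Fin 3) 2 w) = adjF 1 u w := by
    intro u w
    rw [hswap, hswap]
    exact hadj1 u w
  have hM2 : T'.M₂.run (adjF 1) (fun w => Vec.cast T'.dim2.symm (T'.state TGB 0 w)) 0 =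
      T'.M₂.run (adjF 1) (fun w => Vec.cast T'.dim2.symm (T'.state TGA 0 w))
        (Equiv.swap (1 : Fin 3) 2 0) :=
    MPNN.emb_perm T'.M₂ (Equiv.swap (1 : Fin 3) 2) (adjF 1) hadjπ
      (fun w => Vec.cast T'.dim2.symm (T'.state TGA 0 w))
      (fun w => Vec.cast T'.dim2.symm (T'.state TGB 0 w))
      (fun u => congrArg (Vec.cast T'.dim2.symm) (tandg_state0 T' u))
      T'.M₂.depth 0
  rw [hcol, hM2, show Equiv.swap (1 : Fin 3) 2 0 = 0 from hswap 0]

end SepTandG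

/-- part of Corollary 8, `T_rec[M̂] ≰ T_TandG[M̂,F]`: there is a recursive
TGNN over `M̂` such that every time-and-graph TGNN of the class `T_TandG[M̂,F]` disagrees
with it on some discrete pointed temporal graph. -/
theorem Trec_not_le_TandG :
    ∃ (k : ℕ) (T : RecTGNN k), ∀ T' : TandGTGNN k, T'.inHatF →
      ∃ (nv : ℕ) (TG : TemporalGraph (Fin nv) k) (v : Fin nv),
        ¬ (T.output TG v = 1 ↔ T'.output TG v = 1) := by
  refine ⟨2, Trec, ?_⟩
  intro T' _
  by_cases h : T'.output TGA 0 = 1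
  · refine ⟨3, TGB, 0, ?_⟩
    intro hiff
    have h2 : T'.output TGB 0 = 1 := (tandg_eq T') ▸ h
    have h3 := hiff.mpr h2
    rw [outB] at h3
    norm_num at h3
  · refine ⟨3, TGA, 0, ?_⟩
    intro hiff
    exact h (hiff.mp outA)
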